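/- For every itemset X ⊆ I, the utility of X in the database is bounded above by its transaction-weighted utility: u(X) ≤ TWU(X). -/
import Mathlib

open Finset

variable {ι τ : Type*}

/-- Utility of item `i` in transaction `t`: quantity times unit profit. -/
def itemU (pr : ι → ℝ) (q : ι → τ → ℕ) (i : ι) (t : τ) : ℝ :=
  (q i t : ℝ) * pr i

/-- Utility of itemset `X` in transaction `t`. -/
def setU (pr : ι → ℝ) (q : ι → τ → ℕ) (X : Finset ι) (t : τ) : ℝ :=
  ∑ i ∈ X, itemU pr q i t

/-- Transaction utility of transaction `t` (with item set `Tr t`). -/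
def tu (pr : ι → ℝ) (q : ι → τ → ℕ) (Tr : τ → Finset ι) (t : τ) : ℝ :=
  ∑ i ∈ Tr t, itemU pr q i t

/-- Transaction-weighted utility of itemset `X` in database `D`. -/
def TWU [DecidableEq ι] (pr : ι → ℝ) (q : ι → τ → ℕ) (Tr : τ → Finset ι)
    (D : Finset τ) (X : Finset ι) : ℝ :=
  ∑ t ∈ D.filter (fun t => X ⊆ Tr t), tu pr q Tr t

/-- Utility of itemset `X` in database `D`. -/
def dbU [DecidableEq ι] (pr : ι → ℝ) (q : ι → τ → ℕ) (Tr : τ → Finset ι)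
    (D : Finset τ) (X : Finset ι) : ℝ :=
  ∑ t ∈ D.filter (fun t => X ⊆ Tr t), setU pr q X t

/-- Minimum itemset utility of a nonempty itemset `X`. -/
def MIU (mu : ι → ℝ) (X : Finset ι) (hX : X.Nonempty) : ℝ :=
  X.inf' hX mu

/-- Remaining utility of itemset `X` in transaction `t`: total utility of the items of
`Tr t` that come strictly after every item of `X`. -/
def ru [LinearOrder ι] (pr : ι → ℝ) (q : ι → τ → ℕ) (Tr : τ → Finset ι)
    (X : Finset ι) (t : τ) : ℝ :=
  ∑ i ∈ (Tr t).filter (fun i => ∀ x ∈ X, x < i), itemU pr q i t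

/-- Sum of the remaining utilities of itemset `X` over the database `D` (`X.RU`). -/
def dbRU [LinearOrder ι] (pr : ι → ℝ) (q : ι → τ → ℕ) (Tr : τ → Finset ι)
    (D : Finset τ) (X : Finset ι) : ℝ :=
  ∑ t ∈ D.filter (fun t => X ⊆ Tr t), ru pr q Tr X t

/-- for every itemset `X ⊆ I`, `u(X) ≤ TWU(X)`. -/
theorem utility_le_TWU [DecidableEq ι] (I : Finset ι) (pr : ι → ℝ)
    (hpr : ∀ i, 0 ≤ pr i) (D : Finset τ) (Tr : τ → Finset ι) (q : ι → τ → ℕ)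
    (hq : ∀ t ∈ D, ∀ i ∈ Tr t, 0 < q i t) (hTr : ∀ t ∈ D, Tr t ⊆ I)
    (X : Finset ι) (hXI : X ⊆ I) :
    dbU pr q Tr D X ≤ TWU pr q Tr D X := by
  refine Finset.sum_le_sum fun t ht => ?_
  simp only [Finset.mem_filter] at ht
  exact Finset.sum_le_sum_of_subset_of_nonneg ht.2
    (fun i _ _ => mul_nonneg (Nat.cast_nonneg _) (hpr i))
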